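/- Explicit projector for multiplicity-two skeletons: suppose each skeleton edge e has exactly two owners j₋(e) < j₊(e) and T is block diagonal respecting interfaces as in the diagonal/averaging hypothesis. Then the T-orthogonal projection P onto single traces acts by averaging, (Pu)_{j±(e),e} = (u_{j₋(e),e} + u_{j₊(e),e})/2, and the communication matrix Π = 2P − Id acts by swapping, (Πu)_{j₋(e),e} = u_{j₊(e),e} and (Πu)_{j₊(e),e} = u_{j₋(e),e}; in particular P and Π are independent of T. -/

import Mathlib

open Matrix ComplexOrder

theorem stmt19 {σ : Type*} [Fintype σ] [DecidableEq σ]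
    (jm jp : σ → ℕ) (hlt : ∀ e, jm e < jp e)
    (Q : Matrix (σ × Bool) σ ℂ)
    (hQ : ∀ (e : σ) (s : Bool) (e' : σ),
      Q (e, s) e' = if e = e' then 1 else 0)
    (T : Matrix (σ × Bool) (σ × Bool) ℂ) (hT : T.PosDef)
    (hzero : ∀ (e e' : σ) (s s' : Bool),
      (¬(jm e = jm e' ∧ jp e = jp e') ∨ s ≠ s') → T (e, s) (e', s') = 0)
    (hsame : ∀ e e' : σ, jm e = jm e' → jp e = jp e' →
      T (e, false) (e', false) = T (e, true) (e', true))
    (P : Matrix (σ × Bool) (σ × Bool) ℂ)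
    (hPidem : P * P = P)
    (hPrange : Set.range P.mulVec = Set.range Q.mulVec)
    (hPsa : ∀ x y : (σ × Bool) → ℂ,
      star y ⬝ᵥ T *ᵥ (P *ᵥ x) = star (P *ᵥ y) ⬝ᵥ T *ᵥ x) :
    ∀ (u : (σ × Bool) → ℂ) (e : σ) (s : Bool),
      (P *ᵥ u) (e, s) = (u (e, false) + u (e, true)) / 2 ∧
      (((2:ℂ) • P - 1) *ᵥ u) (e, false) = u (e, true) ∧
      (((2:ℂ) • P - 1) *ᵥ u) (e, true) = u (e, false) := by
  classical
  -- the explicit averaging matrix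
  set A : Matrix (σ × Bool) (σ × Bool) ℂ :=
    fun p q => if p.1 = q.1 then (1/2 : ℂ) else 0 with hA
  -- action of A
  have hAv : ∀ (u : (σ × Bool) → ℂ) (e : σ) (s : Bool),
      (A *ᵥ u) (e, s) = (u (e, false) + u (e, true)) / 2 := by
    intro u e s
    simp only [Matrix.mulVec, dotProduct, Fintype.sum_prod_type, hA]
    rw [Finset.sum_comm]
    simp [Finset.sum_ite_eq, Fintype.sum_bool]
    ring
  -- action of Q
  have hQv : ∀ (z : σ → ℂ) (p : σ × Bool), (Q *ᵥ z) p = z p.1 := by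
    intro z p
    simp [Matrix.mulVec, dotProduct, hQ p.1 p.2]
  -- A maps into range Q
  have hAQ : ∀ u : (σ × Bool) → ℂ,
      A *ᵥ u = Q *ᵥ (fun e => (u (e, false) + u (e, true)) / 2) := by
    intro u
    funext p
    rw [hQv]
    obtain ⟨e, s⟩ := p
    exact hAv u e s
  -- A fixes range Q
  have hAfix : ∀ v ∈ Set.range Q.mulVec, A *ᵥ v = v := by
    rintro v ⟨z, rfl⟩
    funext p
    obtain ⟨e, s⟩ := p
    rw [hAv]
    simp only [hQv]
    ring
  -- P fixes range Q
  have hPfix : ∀ v ∈ Set.range Q.mulVec, P *ᵥ v = v := by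
    rintro v hv
    rw [← hPrange] at hv
    obtain ⟨x, rfl⟩ := hv
    rw [Matrix.mulVec_mulVec, hPidem]
  -- the key matrix identity: T * A = Aᴴ * T
  have hTA : T * A = Aᴴ * T := by
    ext p q
    obtain ⟨e, s⟩ := p
    obtain ⟨e', s'⟩ := q
    have hL : (T * A) (e, s) (e', s') = T (e, s) (e', s) / 2 := by
      simp only [Matrix.mul_apply, Fintype.sum_prod_type]
      simp only [hA]
      have : ∀ f : σ, ∑ t : Bool, T (e, s) (f, t) * (if f = e' then (1/2:ℂ) else 0)
          = if f = e' then T (e, s) (e', s) / 2 else 0 := by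
        intro f
        by_cases hf : f = e'
        · subst hf
          simp [Fintype.sum_bool]
          cases s with
          | false =>
            rw [hzero e f false true (Or.inr (by simp))]
            ring
          | true =>
            rw [hzero e f true false (Or.inr (by simp))]
            ring
        · simp [hf]
      rw [Finset.sum_congr rfl (fun f _ => this f)]
      simp
    have hR : (Aᴴ * T) (e, s) (e', s') = T (e, s') (e', s') / 2 := by
      simp only [Matrix.mul_apply, Fintype.sum_prod_type, Matrix.conjTranspose_apply]
      simp only [hA]
      have : ∀ f : σ, ∑ t : Bool, star (if f = e then (1/2:ℂ) else 0) * T (f, t) (e', s')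
          = if f = e then T (e, s') (e', s') / 2 else 0 := by
        intro f
        by_cases hf : f = e
        · subst hf
          simp [Fintype.sum_bool]
          cases s' with
          | false =>
            rw [hzero f e' true false (Or.inr (by simp))]
            ring
          | true =>
            rw [hzero f e' false true (Or.inr (by simp))]
            ring
        · simp [hf]
      rw [Finset.sum_congr rfl (fun f _ => this f)]
      simp
    rw [hL, hR]
    by_cases hss : s = s'
    · rw [hss]
    · by_cases hjj : jm e = jm e' ∧ jp e = jp e'
      · have := hsame e e' hjj.1 hjj.2
        cases s with
        | false =>
          cases s' with
          | false => simp at hss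
          | true => rw [this]
        | true =>
          cases s' with
          | false => rw [this]
          | true => simp at hss
      · rw [hzero e e' s s (Or.inl hjj), hzero e e' s' s' (Or.inl hjj)]
  -- self-adjointness of A w.r.t. T
  have hAsa : ∀ x y : (σ × Bool) → ℂ,
      star y ⬝ᵥ T *ᵥ (A *ᵥ x) = star (A *ᵥ y) ⬝ᵥ T *ᵥ x := by
    intro x y
    rw [Matrix.mulVec_mulVec, Matrix.star_mulVec, Matrix.dotProduct_mulVec,
      Matrix.dotProduct_mulVec, Matrix.vecMul_vecMul, hTA]
  -- main argument: P u = A u for every u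
  intro u e s
  have key : P *ᵥ u = A *ᵥ u := by
    set w : (σ × Bool) → ℂ := P *ᵥ u - A *ᵥ u with hw
    have hwQ : w ∈ Set.range Q.mulVec := by
      have h1 : P *ᵥ u ∈ Set.range Q.mulVec := by
        rw [← hPrange]; exact ⟨u, rfl⟩
      have h2 : A *ᵥ u ∈ Set.range Q.mulVec := ⟨_, (hAQ u).symm⟩
      obtain ⟨z1, hz1⟩ := h1
      obtain ⟨z2, hz2⟩ := h2
      exact ⟨z1 - z2, by rw [Matrix.mulVec_sub, hz1, hz2]⟩
    have hPw : P *ᵥ w = w := hPfix w hwQ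
    have hAw : A *ᵥ w = w := hAfix w hwQ
    have hzero' : star w ⬝ᵥ T *ᵥ w = 0 := by
      have : star w ⬝ᵥ T *ᵥ w
          = star w ⬝ᵥ T *ᵥ (P *ᵥ u) - star w ⬝ᵥ T *ᵥ (A *ᵥ u) := by
        rw [hw]
        rw [show T *ᵥ (P *ᵥ u - A *ᵥ u) = T *ᵥ (P *ᵥ u) - T *ᵥ (A *ᵥ u) from
          Matrix.mulVec_sub T _ _]
        rw [dotProduct_sub]
      rw [this, hPsa u w, hAsa u w, hPw, hAw, sub_self]
    by_contra hne
    have hwne : w ≠ 0 := by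
      intro h0
      apply hne
      have := sub_eq_zero.mp (hw ▸ h0)
      exact this
    have := hT.dotProduct_mulVec_pos hwne
    rw [hzero'] at this
    exact lt_irrefl 0 this
  refine ⟨by rw [key]; exact hAv u e s, ?_, ?_⟩
  · have : (((2:ℂ) • P - 1) *ᵥ u) (e, false)
        = 2 * (P *ᵥ u) (e, false) - u (e, false) := by
      rw [Matrix.sub_mulVec, Matrix.smul_mulVec, Matrix.one_mulVec]
      simp [smul_eq_mul]
    rw [this, key, hAv]
    ring
  · have : (((2:ℂ) • P - 1) *ᵥ u) (e, true)
        = 2 * (P *ᵥ u) (e, true) - u (e, true) := by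
      rw [Matrix.sub_mulVec, Matrix.smul_mulVec, Matrix.one_mulVec]
      simp [smul_eq_mul]
    rw [this, key, hAv]
    ring
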